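/- Define for k≥4 the functions y_k on [0,1] by: y_k(t)=0 for 0≤t≤1/2−1/k; y_k(t)=k(t−1/2+1/k) for 1/2−1/k≤t≤1/2; y_k(t)=−2k(t−1/2−1/(2k)) for 1/2≤t≤1/2+1/k; y_k(t)=−1 for 1/2+1/k≤t≤1. Let f∈C([0,1]), h continuous bounded with primitive H, and g_0 continuous on ℝ with finite limits g_0(±∞) at ±∞; set g(u)=(1+|u|)g_0(u) and u_k=ẏ_k. Then lim_{k→∞} ∫_0^1 f(t) g(u_k(t)) h(y_k(t)) dt = ∫_0^{1/2} f(t)g(0)h(0)dt + ∫_{1/2}^1 f(t)g(0)h(−1)dt + f(1/2)g_0(+∞)(H(1)−H(0)) + f(1/2)g_0(−∞)(H(1)−H(−1)). -/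

import Mathlib

open MeasureTheory Filter Set

/-- The zig-zag trajectory: spikes up to `1`, then jumps down to `-1`. -/
noncomputable def yZig (k : ℕ) (t : ℝ) : ℝ :=
  if t ≤ 1 / 2 - 1 / k then 0
  else if t ≤ 1 / 2 then (k : ℝ) * (t - 1 / 2 + 1 / k)
  else if t ≤ 1 / 2 + 1 / k then -2 * k * (t - 1 / 2 - 1 / (2 * k))
  else -1

/-- Its a.e. derivative: `0, k, -2k, 0` on the four subintervals. -/
noncomputable def uZig (k : ℕ) (t : ℝ) : ℝ :=
  if t ≤ 1 / 2 - 1 / k then 0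
  else if t ≤ 1 / 2 then (k : ℝ)
  else if t ≤ 1 / 2 + 1 / k then -2 * k
  else 0

/-- Piece 1 integral. -/
noncomputable def zigQ1 (f g₀ h : ℝ → ℝ) (k : ℕ) : ℝ :=
  ∫ t in (0:ℝ)..(1 / 2 - 1 / (k:ℝ)), f t * ((1 + |(0:ℝ)|) * g₀ 0) * h 0

/-- Piece 2 integral. -/
noncomputable def zigQ2 (f g₀ h : ℝ → ℝ) (k : ℕ) : ℝ :=
  ∫ t in (1 / 2 - 1 / (k:ℝ))..(1 / 2 : ℝ),
    f t * ((1 + |(k:ℝ)|) * g₀ (k:ℝ)) * h ((k:ℝ) * (t - 1 / 2 + 1 / (k:ℝ)))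

/-- Piece 3 integral. -/
noncomputable def zigQ3 (f g₀ h : ℝ → ℝ) (k : ℕ) : ℝ :=
  ∫ t in (1 / 2 : ℝ)..(1 / 2 + 1 / (k:ℝ)),
    f t * ((1 + |(-2 * (k:ℝ))|) * g₀ (-2 * (k:ℝ))) *
      h (-2 * (k:ℝ) * (t - 1 / 2 - 1 / (2 * (k:ℝ))))

/-- Piece 4 integral. -/
noncomputable def zigQ4 (f g₀ h : ℝ → ℝ) (k : ℕ) : ℝ :=
  ∫ t in (1 / 2 + 1 / (k:ℝ))..(1:ℝ), f t * ((1 + |(0:ℝ)|) * g₀ 0) * h (-1)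

lemma zig_split (f g₀ h : ℝ → ℝ)
    (hf : ContinuousOn f (Set.Icc 0 1)) (hh : Continuous h) (hg₀ : Continuous g₀)
    (k : ℕ) (hk : 4 ≤ k) :
    (∫ t in (0:ℝ)..1, f t * ((1 + |uZig k t|) * g₀ (uZig k t)) * h (yZig k t))
      = zigQ1 f g₀ h k + zigQ2 f g₀ h k + zigQ3 f g₀ h k + zigQ4 f g₀ h k := by
  have hk4 : (4:ℝ) ≤ (k:ℝ) := by exact_mod_cast hk
  have hk0 : (0:ℝ) < (k:ℝ) := by linarith
  have hinv : 1 / (k:ℝ) ≤ 1 / 4 := by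
    apply one_div_le_one_div_of_le <;> norm_num <;> linarith
  have hinv0 : 0 < 1 / (k:ℝ) := by positivity
  set a : ℝ := 1 / 2 - 1 / (k:ℝ) with ha_def
  set c : ℝ := 1 / 2 + 1 / (k:ℝ) with hc_def
  have ha0 : (0:ℝ) ≤ a := by rw [ha_def]; linarith
  have hab : a ≤ 1 / 2 := by rw [ha_def]; linarith
  have hbc : (1/2:ℝ) ≤ c := by rw [hc_def]; linarith
  have hc1 : c ≤ 1 := by rw [hc_def]; linarith
  set G : ℝ → ℝ := fun t => f t * ((1 + |uZig k t|) * g₀ (uZig k t)) * h (yZig k t) with hG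
  -- pointwise identities on the four open-closed pieces
  have e1 : ∀ t ∈ Ioc (0:ℝ) a, G t = f t * ((1 + |(0:ℝ)|) * g₀ 0) * h 0 := by
    intro t ht
    have h1 : t ≤ 1 / 2 - 1 / (k:ℝ) := ht.2
    simp only [hG, uZig, yZig, if_pos h1]
  have e2 : ∀ t ∈ Ioc a (1/2:ℝ), G t
      = f t * ((1 + |(k:ℝ)|) * g₀ (k:ℝ)) * h ((k:ℝ) * (t - 1 / 2 + 1 / (k:ℝ))) := by
    intro t ht
    have h1 : ¬ t ≤ 1 / 2 - 1 / (k:ℝ) := not_le.2 ht.1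
    have h2 : t ≤ 1 / 2 := ht.2
    simp only [hG, uZig, yZig, if_neg h1, if_pos h2]
  have e3 : ∀ t ∈ Ioc (1/2:ℝ) c, G t
      = f t * ((1 + |(-2 * (k:ℝ))|) * g₀ (-2 * (k:ℝ))) *
          h (-2 * (k:ℝ) * (t - 1 / 2 - 1 / (2 * (k:ℝ)))) := by
    intro t ht
    have h1 : ¬ t ≤ 1 / 2 - 1 / (k:ℝ) := by push_neg; linarith [ht.1]
    have h2 : ¬ t ≤ 1 / 2 := not_le.2 ht.1
    have h3 : t ≤ 1 / 2 + 1 / (k:ℝ) := ht.2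
    simp only [hG, uZig, yZig, if_neg h1, if_neg h2, if_pos h3]
  have e4 : ∀ t ∈ Ioc c (1:ℝ), G t = f t * ((1 + |(0:ℝ)|) * g₀ 0) * h (-1) := by
    intro t ht
    have h3 : ¬ t ≤ 1 / 2 + 1 / (k:ℝ) := not_le.2 ht.1
    have h2 : ¬ t ≤ 1 / 2 := by push_neg; linarith [ht.1]
    have h1 : ¬ t ≤ 1 / 2 - 1 / (k:ℝ) := by push_neg; linarith [ht.1]
    simp only [hG, uZig, yZig, if_neg h1, if_neg h2, if_neg h3]
  -- integrability of the nice versions and hence of G on each piece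
  have hsub : ∀ p q : ℝ, 0 ≤ p → q ≤ 1 → p ≤ q → uIcc p q ⊆ Icc (0:ℝ) 1 := by
    intro p q hp hq hpq
    rw [uIcc_of_le hpq]
    exact Icc_subset_Icc hp hq
  have i1 : IntervalIntegrable G volume 0 a := by
    have : IntervalIntegrable (fun t => f t * ((1 + |(0:ℝ)|) * g₀ 0) * h 0) volume 0 a :=
      (((hf.mono (hsub 0 a le_rfl (by rw [ha_def]; linarith) ha0)).mul continuousOn_const).mul
        continuousOn_const).intervalIntegrable
    refine this.congr ?_
    rw [uIoc_of_le ha0]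
    exact fun t ht => (e1 t ht).symm
  have i2 : IntervalIntegrable G volume a (1/2) := by
    have : IntervalIntegrable
        (fun t => f t * ((1 + |(k:ℝ)|) * g₀ (k:ℝ)) * h ((k:ℝ) * (t - 1 / 2 + 1 / (k:ℝ))))
        volume a (1/2) :=
      (((hf.mono (hsub a (1/2) ha0 (by norm_num) hab)).mul continuousOn_const).mul
        (Continuous.continuousOn (by fun_prop))).intervalIntegrable
    refine this.congr ?_
    rw [uIoc_of_le hab]
    exact fun t ht => (e2 t ht).symm
  have i3 : IntervalIntegrable G volume (1/2) c := by
    have : IntervalIntegrable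
        (fun t => f t * ((1 + |(-2 * (k:ℝ))|) * g₀ (-2 * (k:ℝ))) *
          h (-2 * (k:ℝ) * (t - 1 / 2 - 1 / (2 * (k:ℝ))))) volume (1/2) c :=
      (((hf.mono (hsub (1/2) c (by norm_num) hc1 hbc)).mul continuousOn_const).mul
        (Continuous.continuousOn (by fun_prop))).intervalIntegrable
    refine this.congr ?_
    rw [uIoc_of_le hbc]
    exact fun t ht => (e3 t ht).symm
  have i4 : IntervalIntegrable G volume c 1 := by
    have : IntervalIntegrable (fun t => f t * ((1 + |(0:ℝ)|) * g₀ 0) * h (-1)) volume c 1 :=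
      (((hf.mono (hsub c 1 (by rw [hc_def]; positivity) le_rfl hc1)).mul continuousOn_const).mul
        continuousOn_const).intervalIntegrable
    refine this.congr ?_
    rw [uIoc_of_le hc1]
    exact fun t ht => (e4 t ht).symm
  -- split the integral
  have hsplit : (∫ t in (0:ℝ)..1, G t)
      = (∫ t in (0:ℝ)..a, G t) + (∫ t in a..(1/2:ℝ), G t)
        + (∫ t in (1/2:ℝ)..c, G t) + (∫ t in c..(1:ℝ), G t) := by
    rw [intervalIntegral.integral_add_adjacent_intervals i1 i2,
      intervalIntegral.integral_add_adjacent_intervals (i1.trans i2) i3,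
      intervalIntegral.integral_add_adjacent_intervals ((i1.trans i2).trans i3) i4]
  rw [show (∫ t in (0:ℝ)..1, f t * ((1 + |uZig k t|) * g₀ (uZig k t)) * h (yZig k t))
      = ∫ t in (0:ℝ)..1, G t from rfl, hsplit]
  congr 1
  · congr 1
    · congr 1
      · rw [zigQ1]
        refine intervalIntegral.integral_congr_ae (Filter.Eventually.of_forall fun t ht => ?_)
        rw [uIoc_of_le ha0] at ht
        exact e1 t ht
      · rw [zigQ2]
        refine intervalIntegral.integral_congr_ae (Filter.Eventually.of_forall fun t ht => ?_)
        rw [uIoc_of_le hab] at ht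
        exact e2 t ht
    · rw [zigQ3]
      refine intervalIntegral.integral_congr_ae (Filter.Eventually.of_forall fun t ht => ?_)
      rw [uIoc_of_le hbc] at ht
      exact e3 t ht
  · rw [zigQ4]
    refine intervalIntegral.integral_congr_ae (Filter.Eventually.of_forall fun t ht => ?_)
    rw [uIoc_of_le hc1] at ht
    exact e4 t ht

lemma zig_aux_endpoint (f : ℝ → ℝ) (hf : ContinuousOn f (Set.Icc 0 1)) (C : ℝ)
    (p : ℕ → ℝ) (q : ℝ) (hq : q ∈ Set.Icc (0:ℝ) 1)
    (hp : ∀ k : ℕ, 4 ≤ k → p k ∈ Set.Icc (0:ℝ) 1 ∧ |q - p k| ≤ 1 / (k:ℝ)) :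
    Tendsto (fun k : ℕ => (∫ t in (p k)..q, f t * C)) atTop (nhds 0) := by
  obtain ⟨Cf, hCf⟩ := isCompact_Icc.exists_bound_of_continuousOn hf
  have hCf0 : 0 ≤ Cf := le_trans (norm_nonneg _) (hCf 0 (by norm_num))
  apply squeeze_zero_norm' (a := fun k : ℕ => (Cf * |C|) * (1 / (k:ℝ)))
  · filter_upwards [eventually_ge_atTop 4] with k hk
    obtain ⟨hpk, hqp⟩ := hp k hk
    have hbd : ∀ t ∈ Set.uIoc (p k) q, ‖f t * C‖ ≤ Cf * |C| := by
      intro t ht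
      have ht' : t ∈ Set.Icc (0:ℝ) 1 := by
        rcases le_total (p k) q with hle | hle
        · rw [uIoc_of_le hle] at ht
          exact ⟨le_trans hpk.1 ht.1.le, le_trans ht.2 hq.2⟩
        · rw [uIoc_of_ge hle] at ht
          exact ⟨le_trans hq.1 ht.1.le, le_trans ht.2 hpk.2⟩
      rw [Real.norm_eq_abs, abs_mul]
      have := hCf t ht'
      rw [Real.norm_eq_abs] at this
      exact mul_le_mul_of_nonneg_right this (abs_nonneg C)
    calc ‖∫ t in (p k)..q, f t * C‖ ≤ (Cf * |C|) * |q - p k| :=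
          intervalIntegral.norm_integral_le_of_norm_le_const hbd
      _ ≤ (Cf * |C|) * (1 / (k:ℝ)) := by
          exact mul_le_mul_of_nonneg_left hqp (by positivity)
  · have := tendsto_one_div_atTop_nhds_zero_nat.const_mul (Cf * |C|)
    simpa using this

lemma zig_limQ1 (f g₀ h : ℝ → ℝ) (hf : ContinuousOn f (Set.Icc 0 1)) :
    Tendsto (zigQ1 f g₀ h) atTop
      (nhds (∫ t in (0:ℝ)..(1/2), f t * ((1 + |(0:ℝ)|) * g₀ 0) * h 0)) := by
  set C : ℝ := ((1 + |(0:ℝ)|) * g₀ 0) * h 0 with hC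
  have hfun : ∀ t : ℝ, f t * ((1 + |(0:ℝ)|) * g₀ 0) * h 0 = f t * C := by
    intro t; rw [hC]; ring
  have key : ∀ k : ℕ, 4 ≤ k →
      zigQ1 f g₀ h k = (∫ t in (0:ℝ)..(1/2), f t * ((1 + |(0:ℝ)|) * g₀ 0) * h 0)
        - (∫ t in (1/2 - 1/(k:ℝ) : ℝ)..(1/2:ℝ), f t * C) := by
    intro k hk
    have hk4 : (4:ℝ) ≤ (k:ℝ) := by exact_mod_cast hk
    have hinv : 1 / (k:ℝ) ≤ 1 / 4 := by
      apply one_div_le_one_div_of_le <;> norm_num <;> linarith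
    have hinv0 : 0 < 1 / (k:ℝ) := by positivity
    have ha0 : (0:ℝ) ≤ 1/2 - 1/(k:ℝ) := by linarith
    have hab : (1/2 - 1/(k:ℝ) : ℝ) ≤ 1/2 := by linarith
    have hsub1 : uIcc (0:ℝ) (1/2 - 1/(k:ℝ)) ⊆ Set.Icc (0:ℝ) 1 := by
      rw [uIcc_of_le ha0]; exact Icc_subset_Icc le_rfl (by linarith)
    have hsub2 : uIcc (1/2 - 1/(k:ℝ) : ℝ) (1/2) ⊆ Set.Icc (0:ℝ) 1 := by
      rw [uIcc_of_le hab]; exact Icc_subset_Icc ha0 (by norm_num)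
    have i1 : IntervalIntegrable (fun t => f t * C) volume 0 (1/2 - 1/(k:ℝ)) :=
      ((hf.mono hsub1).mul continuousOn_const).intervalIntegrable
    have i2 : IntervalIntegrable (fun t => f t * C) volume (1/2 - 1/(k:ℝ)) (1/2) :=
      ((hf.mono hsub2).mul continuousOn_const).intervalIntegrable
    have hadd := intervalIntegral.integral_add_adjacent_intervals i1 i2
    rw [zigQ1]
    simp only [hfun]
    linarith [hadd]
  have h0 : Tendsto (fun k : ℕ => (∫ t in (1/2 - 1/(k:ℝ) : ℝ)..(1/2:ℝ), f t * C))
      atTop (nhds 0) := by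
    apply zig_aux_endpoint f hf C _ _ (by norm_num)
    intro k hk
    have hk4 : (4:ℝ) ≤ (k:ℝ) := by exact_mod_cast hk
    have hinv : 1 / (k:ℝ) ≤ 1 / 4 := by
      apply one_div_le_one_div_of_le <;> norm_num <;> linarith
    have hinv0 : 0 < 1 / (k:ℝ) := by positivity
    refine ⟨Set.mem_Icc.2 ⟨by linarith, by linarith⟩, ?_⟩
    rw [show (1/2 - (1/2 - 1/(k:ℝ)) : ℝ) = 1/(k:ℝ) by ring, abs_of_nonneg hinv0.le]
  have := (tendsto_const_nhds
    (x := (∫ t in (0:ℝ)..(1/2), f t * ((1 + |(0:ℝ)|) * g₀ 0) * h 0))).sub h0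
  rw [sub_zero] at this
  apply this.congr'
  filter_upwards [eventually_ge_atTop 4] with k hk
  exact (key k hk).symm

lemma zig_limQ4 (f g₀ h : ℝ → ℝ) (hf : ContinuousOn f (Set.Icc 0 1)) :
    Tendsto (zigQ4 f g₀ h) atTop
      (nhds (∫ t in (1/2:ℝ)..1, f t * ((1 + |(0:ℝ)|) * g₀ 0) * h (-1))) := by
  set C : ℝ := ((1 + |(0:ℝ)|) * g₀ 0) * h (-1) with hC
  have hfun : ∀ t : ℝ, f t * ((1 + |(0:ℝ)|) * g₀ 0) * h (-1) = f t * C := by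
    intro t; rw [hC]; ring
  have key : ∀ k : ℕ, 4 ≤ k →
      zigQ4 f g₀ h k = (∫ t in (1/2:ℝ)..1, f t * ((1 + |(0:ℝ)|) * g₀ 0) * h (-1))
        - (∫ t in (1/2:ℝ)..(1/2 + 1/(k:ℝ) : ℝ), f t * C) := by
    intro k hk
    have hk4 : (4:ℝ) ≤ (k:ℝ) := by exact_mod_cast hk
    have hinv : 1 / (k:ℝ) ≤ 1 / 4 := by
      apply one_div_le_one_div_of_le <;> norm_num <;> linarith
    have hinv0 : 0 < 1 / (k:ℝ) := by positivity
    have hbc : (1/2:ℝ) ≤ 1/2 + 1/(k:ℝ) := by linarith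
    have hc1 : (1/2 + 1/(k:ℝ) : ℝ) ≤ 1 := by linarith
    have hsub1 : uIcc (1/2:ℝ) (1/2 + 1/(k:ℝ)) ⊆ Set.Icc (0:ℝ) 1 := by
      rw [uIcc_of_le hbc]; exact Icc_subset_Icc (by norm_num) hc1
    have hsub2 : uIcc (1/2 + 1/(k:ℝ) : ℝ) 1 ⊆ Set.Icc (0:ℝ) 1 := by
      rw [uIcc_of_le hc1]; exact Icc_subset_Icc (by linarith) le_rfl
    have i1 : IntervalIntegrable (fun t => f t * C) volume (1/2) (1/2 + 1/(k:ℝ)) :=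
      ((hf.mono hsub1).mul continuousOn_const).intervalIntegrable
    have i2 : IntervalIntegrable (fun t => f t * C) volume (1/2 + 1/(k:ℝ)) 1 :=
      ((hf.mono hsub2).mul continuousOn_const).intervalIntegrable
    have hadd := intervalIntegral.integral_add_adjacent_intervals i1 i2
    rw [zigQ4]
    simp only [hfun]
    linarith [hadd]
  have h0 : Tendsto (fun k : ℕ => (∫ t in (1/2:ℝ)..(1/2 + 1/(k:ℝ) : ℝ), f t * C))
      atTop (nhds 0) := by
    have h0' : Tendsto (fun k : ℕ => (∫ t in (1/2 + 1/(k:ℝ) : ℝ)..(1/2:ℝ), f t * C))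
        atTop (nhds 0) := by
      apply zig_aux_endpoint f hf C _ _ (by norm_num)
      intro k hk
      have hk4 : (4:ℝ) ≤ (k:ℝ) := by exact_mod_cast hk
      have hinv : 1 / (k:ℝ) ≤ 1 / 4 := by
        apply one_div_le_one_div_of_le <;> norm_num <;> linarith
      have hinv0 : 0 < 1 / (k:ℝ) := by positivity
      refine ⟨Set.mem_Icc.2 ⟨by linarith, by linarith⟩, ?_⟩
      rw [show (1/2 - (1/2 + 1/(k:ℝ)) : ℝ) = -(1/(k:ℝ)) by ring, abs_neg,
          abs_of_nonneg hinv0.le]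
    have := h0'.neg
    rw [neg_zero] at this
    apply this.congr
    intro k
    rw [← intervalIntegral.integral_symm]
  have := (tendsto_const_nhds
    (x := (∫ t in (1/2:ℝ)..1, f t * ((1 + |(0:ℝ)|) * g₀ 0) * h (-1)))).sub h0
  rw [sub_zero] at this
  apply this.congr'
  filter_upwards [eventually_ge_atTop 4] with k hk
  exact (key k hk).symm

lemma zig_ftc2 (h H : ℝ → ℝ) (hh : Continuous h) (hH : ∀ x, HasDerivAt H (h x) x)
    (k : ℕ) (hk : 1 ≤ k) :
    (∫ t in (1 / 2 - 1 / (k:ℝ))..(1 / 2 : ℝ), h ((k:ℝ) * (t - 1 / 2 + 1 / (k:ℝ))))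
      = (H 1 - H 0) / (k:ℝ) := by
  have hk0 : (0:ℝ) < (k:ℝ) := by exact_mod_cast hk
  have hd : ∀ t ∈ uIcc (1 / 2 - 1 / (k:ℝ)) (1 / 2 : ℝ),
      HasDerivAt (fun t => (1 / (k:ℝ)) * H ((k:ℝ) * (t - 1 / 2 + 1 / (k:ℝ))))
        (h ((k:ℝ) * (t - 1 / 2 + 1 / (k:ℝ)))) t := by
    intro t _
    have h1 : HasDerivAt (fun t : ℝ => (k:ℝ) * (t - 1 / 2 + 1 / (k:ℝ))) (k:ℝ) t := by
      have := (((hasDerivAt_id t).sub_const (1/2)).add_const (1/(k:ℝ))).const_mul (k:ℝ)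
      rw [mul_one] at this
      exact this
    have h2 := (hH ((k:ℝ) * (t - 1 / 2 + 1 / (k:ℝ)))).comp t h1
    have h3 := h2.const_mul (1 / (k:ℝ))
    refine h3.congr_deriv ?_
    field_simp
  rw [intervalIntegral.integral_eq_sub_of_hasDerivAt hd
    ((hh.comp (by fun_prop)).intervalIntegrable _ _)]
  have e1 : (k:ℝ) * ((1:ℝ)/2 - 1/2 + 1/(k:ℝ)) = 1 := by field_simp; ring
  have e2 : (k:ℝ) * ((1/2 - 1/(k:ℝ)) - 1/2 + 1/(k:ℝ)) = 0 := by ring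
  beta_reduce
  rw [e1, e2]
  ring

lemma zig_limQ2 (f h H g₀ : ℝ → ℝ) (g₀pinf M : ℝ)
    (hf : ContinuousOn f (Set.Icc 0 1))
    (hh : Continuous h) (hhbd : ∀ y, |h y| ≤ M)
    (hH : ∀ x, HasDerivAt H (h x) x)
    (hg₀p : Tendsto g₀ atTop (nhds g₀pinf)) :
    Tendsto (zigQ2 f g₀ h) atTop (nhds (f (1/2) * g₀pinf * (H 1 - H 0))) := by
  have hf2 : ContinuousAt f (1/2) :=
    hf.continuousAt (Icc_mem_nhds (by norm_num) (by norm_num))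
  have hM0 : 0 ≤ M := (abs_nonneg _).trans (hhbd 0)
  -- decomposition
  have hdec : ∀ k : ℕ, 4 ≤ k → zigQ2 f g₀ h k
      = (∫ t in (1 / 2 - 1 / (k:ℝ))..(1 / 2 : ℝ),
          (f t - f (1/2)) * ((1 + |(k:ℝ)|) * g₀ (k:ℝ)) * h ((k:ℝ) * (t - 1 / 2 + 1 / (k:ℝ))))
        + f (1/2) * ((1 + |(k:ℝ)|) * g₀ (k:ℝ)) * ((H 1 - H 0) / (k:ℝ)) := by
    intro k hk
    have hk4 : (4:ℝ) ≤ (k:ℝ) := by exact_mod_cast hk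
    have hinv : 1 / (k:ℝ) ≤ 1 / 4 := by
      apply one_div_le_one_div_of_le <;> norm_num <;> linarith
    have hinv0 : 0 < 1 / (k:ℝ) := by positivity
    have hab : (1/2 - 1/(k:ℝ) : ℝ) ≤ 1/2 := by linarith
    have hsub : uIcc (1/2 - 1/(k:ℝ) : ℝ) (1/2) ⊆ Set.Icc (0:ℝ) 1 := by
      rw [uIcc_of_le hab]; exact Icc_subset_Icc (by linarith) (by norm_num)
    have hch : Continuous fun t : ℝ => h ((k:ℝ) * (t - 1 / 2 + 1 / (k:ℝ))) := by fun_prop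
    have int1 : IntervalIntegrable
        (fun t => (f t - f (1/2)) * ((1 + |(k:ℝ)|) * g₀ (k:ℝ)) * h ((k:ℝ) * (t - 1 / 2 + 1 / (k:ℝ))))
        volume (1/2 - 1/(k:ℝ)) (1/2) :=
      ((((hf.mono hsub).sub continuousOn_const).mul continuousOn_const).mul
        hch.continuousOn).intervalIntegrable
    have int2 : IntervalIntegrable
        (fun t => f (1/2) * ((1 + |(k:ℝ)|) * g₀ (k:ℝ)) * h ((k:ℝ) * (t - 1 / 2 + 1 / (k:ℝ))))
        volume (1/2 - 1/(k:ℝ)) (1/2) :=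
      ((continuous_const.mul hch).intervalIntegrable _ _)
    have e : zigQ2 f g₀ h k = ∫ t in (1 / 2 - 1 / (k:ℝ))..(1 / 2 : ℝ),
        ((f t - f (1/2)) * ((1 + |(k:ℝ)|) * g₀ (k:ℝ)) * h ((k:ℝ) * (t - 1 / 2 + 1 / (k:ℝ)))
          + f (1/2) * ((1 + |(k:ℝ)|) * g₀ (k:ℝ)) * h ((k:ℝ) * (t - 1 / 2 + 1 / (k:ℝ)))) := by
      rw [zigQ2]
      exact intervalIntegral.integral_congr fun t _ => by ring
    rw [e, intervalIntegral.integral_add int1 int2]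
    congr 1
    rw [intervalIntegral.integral_const_mul, zig_ftc2 h H hh hH k (by omega)]
  -- limit of the main term
  have hm : Tendsto (fun k : ℕ =>
      f (1/2) * ((1 + |(k:ℝ)|) * g₀ (k:ℝ)) * ((H 1 - H 0) / (k:ℝ))) atTop
      (nhds (f (1/2) * g₀pinf * (H 1 - H 0))) := by
    have base : Tendsto (fun k : ℕ =>
        (f (1/2) * (H 1 - H 0)) * ((1/(k:ℝ) + 1) * g₀ (k:ℝ))) atTop
        (nhds ((f (1/2) * (H 1 - H 0)) * ((0 + 1) * g₀pinf))) :=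
      tendsto_const_nhds.mul
        (((tendsto_one_div_atTop_nhds_zero_nat).add tendsto_const_nhds).mul
          (hg₀p.comp tendsto_natCast_atTop_atTop))
    rw [show (f (1/2) * (H 1 - H 0)) * ((0 + 1) * g₀pinf)
        = f (1/2) * g₀pinf * (H 1 - H 0) by ring] at base
    apply base.congr'
    filter_upwards [eventually_ge_atTop 1] with k hk
    have hk0 : (0:ℝ) < (k:ℝ) := by exact_mod_cast hk
    rw [abs_of_nonneg hk0.le]
    field_simp
  -- the error term tends to 0
  have hE : Tendsto (fun k : ℕ => ∫ t in (1 / 2 - 1 / (k:ℝ))..(1 / 2 : ℝ),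
      (f t - f (1/2)) * ((1 + |(k:ℝ)|) * g₀ (k:ℝ)) * h ((k:ℝ) * (t - 1 / 2 + 1 / (k:ℝ))))
      atTop (nhds 0) := by
    rw [Metric.tendsto_atTop]
    intro ε hε
    set D : ℝ := 2 * (|g₀pinf| + 1) * (M + 1) with hD_def
    have hD0 : (0:ℝ) ≤ D := by positivity
    have hD1 : (0:ℝ) < D + 1 := by positivity
    set ε' : ℝ := ε / (D + 1) with hε'_def
    have hε'0 : 0 < ε' := by positivity
    obtain ⟨δ, hδ0, hδ⟩ := Metric.continuousAt_iff.mp hf2 ε' hε'0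
    have hg' : ∀ᶠ x : ℝ in atTop, |g₀ x| < |g₀pinf| + 1 :=
      Filter.Tendsto.eventually_lt_const (lt_add_one _) hg₀p.abs
    obtain ⟨R, hR⟩ := eventually_atTop.1 hg'
    obtain ⟨N1, hN1⟩ := exists_nat_gt (max R (1/δ))
    refine ⟨max (N1 + 1) 4, fun k hk => ?_⟩
    have hk4 : (4:ℝ) ≤ (k:ℝ) := by
      exact_mod_cast le_trans (le_max_right (N1+1) 4) hk
    have hk0 : (0:ℝ) < (k:ℝ) := by linarith
    have hkN : (N1:ℝ) < (k:ℝ) := by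
      exact_mod_cast lt_of_lt_of_le (Nat.lt_succ_self N1) (le_trans (le_max_left _ _) hk)
    have hkR : R ≤ (k:ℝ) := le_of_lt (lt_trans (lt_of_le_of_lt (le_max_left R (1/δ)) hN1) hkN)
    have hkδ : 1/δ < (k:ℝ) := lt_trans (lt_of_le_of_lt (le_max_right R (1/δ)) hN1) hkN
    have hbg : |g₀ (k:ℝ)| ≤ |g₀pinf| + 1 := le_of_lt (hR (k:ℝ) hkR)
    have hinvk : 1/(k:ℝ) < δ := by
      rw [div_lt_iff₀ hk0]
      have h1 : 1 < (k:ℝ) * δ := by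
        have := (div_lt_iff₀ hδ0).mp hkδ
        linarith [this]
      linarith [mul_comm (k:ℝ) δ ▸ h1]
    have hinv : 1 / (k:ℝ) ≤ 1 / 4 := by
      rw [div_le_div_iff₀ hk0 (by norm_num)]; linarith
    have hinv0 : 0 < 1 / (k:ℝ) := by positivity
    have hab : (1/2 - 1/(k:ℝ) : ℝ) ≤ 1/2 := by linarith
    rw [Real.dist_eq, sub_zero]
    have hB : ∀ t ∈ Set.uIoc (1/2 - 1/(k:ℝ) : ℝ) (1/2:ℝ),
        ‖(f t - f (1/2)) * ((1 + |(k:ℝ)|) * g₀ (k:ℝ)) * h ((k:ℝ) * (t - 1 / 2 + 1 / (k:ℝ)))‖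
          ≤ ε' * ((1 + (k:ℝ)) * (|g₀pinf| + 1)) * M := by
      rw [uIoc_of_le hab]
      intro t ht
      have ht1 : |t - 1/2| < δ := by
        rw [abs_of_nonpos (by linarith [ht.2])]
        linarith [ht.1, ht.2]
      have hft : |f t - f (1/2)| ≤ ε' := by
        have := hδ (show dist t (1/2) < δ by rw [Real.dist_eq]; exact ht1)
        rw [Real.dist_eq] at this
        exact this.le
      rw [Real.norm_eq_abs, abs_mul, abs_mul, abs_mul,
        abs_of_nonneg (show (0:ℝ) ≤ 1 + |(k:ℝ)| by positivity),
        abs_of_nonneg hk0.le]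
      gcongr
      exact hhbd _
    calc |∫ t in (1 / 2 - 1 / (k:ℝ))..(1 / 2 : ℝ),
          (f t - f (1/2)) * ((1 + |(k:ℝ)|) * g₀ (k:ℝ)) * h ((k:ℝ) * (t - 1 / 2 + 1 / (k:ℝ)))|
        ≤ ε' * ((1 + (k:ℝ)) * (|g₀pinf| + 1)) * M * |(1:ℝ)/2 - (1/2 - 1/(k:ℝ))| :=
          intervalIntegral.norm_integral_le_of_norm_le_const hB
      _ = ε' * (((1 + (k:ℝ)) * (1/(k:ℝ))) * (|g₀pinf| + 1) * M) := by
          rw [show ((1:ℝ)/2 - (1/2 - 1/(k:ℝ))) = 1/(k:ℝ) by ring, abs_of_nonneg hinv0.le]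
          ring
      _ ≤ ε' * D := by
          have h2 : (1 + (k:ℝ)) * (1/(k:ℝ)) ≤ 2 := by
            rw [mul_one_div, div_le_iff₀ hk0]
            linarith
          rw [hD_def]
          have hB0 : (0:ℝ) ≤ |g₀pinf| + 1 := by positivity
          have hX : ((1 + (k:ℝ)) * (1/(k:ℝ))) * (|g₀pinf| + 1) * M
              ≤ 2 * (|g₀pinf| + 1) * (M + 1) :=
            le_trans
              (mul_le_mul_of_nonneg_right (mul_le_mul_of_nonneg_right h2 hB0) hM0)
              (mul_le_mul_of_nonneg_left (by linarith) (by positivity))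
          exact mul_le_mul_of_nonneg_left hX hε'0.le
      _ < ε := by
          have he : ε' * (D + 1) = ε := div_mul_cancel₀ ε (ne_of_gt hD1)
          nlinarith [hε'0]
  have lim := hE.add hm
  rw [zero_add] at lim
  apply lim.congr'
  filter_upwards [eventually_ge_atTop 4] with k hk
  exact (hdec k hk).symm

lemma zig_ftc3 (h H : ℝ → ℝ) (hh : Continuous h) (hH : ∀ x, HasDerivAt H (h x) x)
    (k : ℕ) (hk : 1 ≤ k) :
    (∫ t in (1 / 2 : ℝ)..(1 / 2 + 1 / (k:ℝ)), h (-2 * (k:ℝ) * (t - 1 / 2 - 1 / (2 * (k:ℝ)))))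
      = (H 1 - H (-1)) / (2 * (k:ℝ)) := by
  have hk0 : (0:ℝ) < (k:ℝ) := by exact_mod_cast hk
  have hd : ∀ t ∈ uIcc (1 / 2 : ℝ) (1 / 2 + 1 / (k:ℝ)),
      HasDerivAt (fun t => (-(1 / (2 * (k:ℝ)))) * H (-2 * (k:ℝ) * (t - 1 / 2 - 1 / (2 * (k:ℝ)))))
        (h (-2 * (k:ℝ) * (t - 1 / 2 - 1 / (2 * (k:ℝ))))) t := by
    intro t _
    have h1 : HasDerivAt (fun t : ℝ => -2 * (k:ℝ) * (t - 1 / 2 - 1 / (2 * (k:ℝ))))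
        (-2 * (k:ℝ)) t := by
      have := (((hasDerivAt_id t).sub_const (1/2)).sub_const
        (1/(2*(k:ℝ)))).const_mul (-2*(k:ℝ))
      rw [mul_one] at this
      exact this
    have h2 := (hH (-2 * (k:ℝ) * (t - 1 / 2 - 1 / (2 * (k:ℝ))))).comp t h1
    have h3 := h2.const_mul (-(1 / (2 * (k:ℝ))))
    refine h3.congr_deriv ?_
    field_simp
  rw [intervalIntegral.integral_eq_sub_of_hasDerivAt hd
    ((hh.comp (by fun_prop)).intervalIntegrable _ _)]
  have e1 : -2 * (k:ℝ) * ((1/2 + 1/(k:ℝ)) - 1 / 2 - 1 / (2 * (k:ℝ))) = -1 := by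
    field_simp
    ring
  have e2 : -2 * (k:ℝ) * ((1:ℝ)/2 - 1 / 2 - 1 / (2 * (k:ℝ))) = 1 := by
    field_simp
    ring
  rw [e1, e2]
  ring

lemma zig_limQ3 (f h H g₀ : ℝ → ℝ) (g₀minf M : ℝ)
    (hf : ContinuousOn f (Set.Icc 0 1))
    (hh : Continuous h) (hhbd : ∀ y, |h y| ≤ M)
    (hH : ∀ x, HasDerivAt H (h x) x)
    (hg₀m : Tendsto g₀ atBot (nhds g₀minf)) :
    Tendsto (zigQ3 f g₀ h) atTop (nhds (f (1/2) * g₀minf * (H 1 - H (-1)))) := by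
  have hf2 : ContinuousAt f (1/2) :=
    hf.continuousAt (Icc_mem_nhds (by norm_num) (by norm_num))
  have hM0 : 0 ≤ M := (abs_nonneg _).trans (hhbd 0)
  have hdec : ∀ k : ℕ, 4 ≤ k → zigQ3 f g₀ h k
      = (∫ t in (1 / 2 : ℝ)..(1 / 2 + 1 / (k:ℝ)),
          (f t - f (1/2)) * ((1 + |(-2 * (k:ℝ))|) * g₀ (-2 * (k:ℝ))) *
            h (-2 * (k:ℝ) * (t - 1 / 2 - 1 / (2 * (k:ℝ)))))
        + f (1/2) * ((1 + |(-2 * (k:ℝ))|) * g₀ (-2 * (k:ℝ))) * ((H 1 - H (-1)) / (2 * (k:ℝ))) := by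
    intro k hk
    have hk4 : (4:ℝ) ≤ (k:ℝ) := by exact_mod_cast hk
    have hk0 : (0:ℝ) < (k:ℝ) := by linarith
    have hinv : 1 / (k:ℝ) ≤ 1 / 4 := by
      rw [div_le_div_iff₀ hk0 (by norm_num)]; linarith
    have hinv0 : 0 < 1 / (k:ℝ) := by positivity
    have hbc : (1/2:ℝ) ≤ 1/2 + 1/(k:ℝ) := by linarith
    have hsub : uIcc (1/2:ℝ) (1/2 + 1/(k:ℝ)) ⊆ Set.Icc (0:ℝ) 1 := by
      rw [uIcc_of_le hbc]; exact Icc_subset_Icc (by norm_num) (by linarith)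
    have hch : Continuous fun t : ℝ => h (-2 * (k:ℝ) * (t - 1 / 2 - 1 / (2 * (k:ℝ)))) := by
      fun_prop
    have int1 : IntervalIntegrable
        (fun t => (f t - f (1/2)) * ((1 + |(-2 * (k:ℝ))|) * g₀ (-2 * (k:ℝ))) *
          h (-2 * (k:ℝ) * (t - 1 / 2 - 1 / (2 * (k:ℝ)))))
        volume (1/2) (1/2 + 1/(k:ℝ)) :=
      ((((hf.mono hsub).sub continuousOn_const).mul continuousOn_const).mul
        hch.continuousOn).intervalIntegrable
    have int2 : IntervalIntegrable
        (fun t => f (1/2) * ((1 + |(-2 * (k:ℝ))|) * g₀ (-2 * (k:ℝ))) *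
          h (-2 * (k:ℝ) * (t - 1 / 2 - 1 / (2 * (k:ℝ)))))
        volume (1/2) (1/2 + 1/(k:ℝ)) :=
      ((continuous_const.mul hch).intervalIntegrable _ _)
    have e : zigQ3 f g₀ h k = ∫ t in (1 / 2 : ℝ)..(1 / 2 + 1 / (k:ℝ)),
        ((f t - f (1/2)) * ((1 + |(-2 * (k:ℝ))|) * g₀ (-2 * (k:ℝ))) *
            h (-2 * (k:ℝ) * (t - 1 / 2 - 1 / (2 * (k:ℝ))))
          + f (1/2) * ((1 + |(-2 * (k:ℝ))|) * g₀ (-2 * (k:ℝ))) *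
            h (-2 * (k:ℝ) * (t - 1 / 2 - 1 / (2 * (k:ℝ))))) := by
      rw [zigQ3]
      exact intervalIntegral.integral_congr fun t _ => by ring
    rw [e, intervalIntegral.integral_add int1 int2]
    congr 1
    rw [intervalIntegral.integral_const_mul, zig_ftc3 h H hh hH k (by omega)]
  have hneg : Tendsto (fun k : ℕ => -2*(k:ℝ)) atTop atBot := by
    have h1 : Tendsto (fun k : ℕ => (2:ℝ)*(k:ℝ)) atTop atTop :=
      tendsto_natCast_atTop_atTop.const_mul_atTop two_pos
    have h2 := tendsto_neg_atTop_atBot.comp h1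
    exact h2.congr fun k => by simp [Function.comp]
  have hm : Tendsto (fun k : ℕ =>
      f (1/2) * ((1 + |(-2 * (k:ℝ))|) * g₀ (-2 * (k:ℝ))) * ((H 1 - H (-1)) / (2 * (k:ℝ)))) atTop
      (nhds (f (1/2) * g₀minf * (H 1 - H (-1)))) := by
    have hhalf : Tendsto (fun k : ℕ => 1/(2*(k:ℝ))) atTop (nhds 0) := by
      have h1 := tendsto_one_div_atTop_nhds_zero_nat.const_mul (1/2:ℝ)
      rw [mul_zero] at h1
      exact h1.congr fun k => by ring
    have base : Tendsto (fun k : ℕ =>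
        (f (1/2) * (H 1 - H (-1))) * ((1/(2*(k:ℝ)) + 1) * g₀ (-2 * (k:ℝ)))) atTop
        (nhds ((f (1/2) * (H 1 - H (-1))) * ((0 + 1) * g₀minf))) :=
      tendsto_const_nhds.mul
        ((hhalf.add tendsto_const_nhds).mul (hg₀m.comp hneg))
    rw [show (f (1/2) * (H 1 - H (-1))) * ((0 + 1) * g₀minf)
        = f (1/2) * g₀minf * (H 1 - H (-1)) by ring] at base
    apply base.congr'
    filter_upwards [eventually_ge_atTop 1] with k hk
    have hk0 : (0:ℝ) < (k:ℝ) := by exact_mod_cast hk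
    have habs : |(-2 * (k:ℝ))| = 2*(k:ℝ) := by
      rw [abs_mul, abs_of_nonneg hk0.le]; norm_num
    rw [habs]
    field_simp
  have hE : Tendsto (fun k : ℕ => ∫ t in (1 / 2 : ℝ)..(1 / 2 + 1 / (k:ℝ)),
      (f t - f (1/2)) * ((1 + |(-2 * (k:ℝ))|) * g₀ (-2 * (k:ℝ))) *
        h (-2 * (k:ℝ) * (t - 1 / 2 - 1 / (2 * (k:ℝ)))))
      atTop (nhds 0) := by
    rw [Metric.tendsto_atTop]
    intro ε hε
    set D : ℝ := 3 * (|g₀minf| + 1) * (M + 1) with hD_def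
    have hD0 : (0:ℝ) ≤ D := by positivity
    have hD1 : (0:ℝ) < D + 1 := by positivity
    set ε' : ℝ := ε / (D + 1) with hε'_def
    have hε'0 : 0 < ε' := by positivity
    obtain ⟨δ, hδ0, hδ⟩ := Metric.continuousAt_iff.mp hf2 ε' hε'0
    have hg' : ∀ᶠ x : ℝ in atBot, |g₀ x| < |g₀minf| + 1 :=
      Filter.Tendsto.eventually_lt_const (lt_add_one _) hg₀m.abs
    obtain ⟨R, hR⟩ := eventually_atBot.1 hg'
    obtain ⟨N1, hN1⟩ := exists_nat_gt (max (-R/2) (1/δ))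
    refine ⟨max (N1 + 1) 4, fun k hk => ?_⟩
    have hk4 : (4:ℝ) ≤ (k:ℝ) := by
      exact_mod_cast le_trans (le_max_right (N1+1) 4) hk
    have hk0 : (0:ℝ) < (k:ℝ) := by linarith
    have hkN : (N1:ℝ) < (k:ℝ) := by
      exact_mod_cast lt_of_lt_of_le (Nat.lt_succ_self N1) (le_trans (le_max_left _ _) hk)
    have hkR : -R/2 < (k:ℝ) := lt_trans (lt_of_le_of_lt (le_max_left (-R/2) (1/δ)) hN1) hkN
    have hkR' : -2 * (k:ℝ) ≤ R := by linarith
    have hkδ : 1/δ < (k:ℝ) := lt_trans (lt_of_le_of_lt (le_max_right (-R/2) (1/δ)) hN1) hkN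
    have hbg : |g₀ (-2 * (k:ℝ))| ≤ |g₀minf| + 1 := le_of_lt (hR (-2 * (k:ℝ)) hkR')
    have hinvk : 1/(k:ℝ) < δ := by
      rw [div_lt_iff₀ hk0]
      have h1 : 1 < (k:ℝ) * δ := by
        have := (div_lt_iff₀ hδ0).mp hkδ
        linarith [this]
      linarith [mul_comm (k:ℝ) δ ▸ h1]
    have hinv : 1 / (k:ℝ) ≤ 1 / 4 := by
      rw [div_le_div_iff₀ hk0 (by norm_num)]; linarith
    have hinv0 : 0 < 1 / (k:ℝ) := by positivity
    have hbc : (1/2:ℝ) ≤ 1/2 + 1/(k:ℝ) := by linarith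
    have habs : |(-2 * (k:ℝ))| = 2*(k:ℝ) := by
      rw [abs_mul, abs_of_nonneg hk0.le]; norm_num
    rw [Real.dist_eq, sub_zero]
    have hB : ∀ t ∈ Set.uIoc (1/2:ℝ) (1/2 + 1/(k:ℝ)),
        ‖(f t - f (1/2)) * ((1 + |(-2 * (k:ℝ))|) * g₀ (-2 * (k:ℝ))) *
          h (-2 * (k:ℝ) * (t - 1 / 2 - 1 / (2 * (k:ℝ))))‖
          ≤ ε' * ((1 + 2*(k:ℝ)) * (|g₀minf| + 1)) * M := by
      rw [uIoc_of_le hbc]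
      intro t ht
      have ht1 : |t - 1/2| < δ := by
        rw [abs_of_nonneg (by linarith [ht.1])]
        linarith [ht.1, ht.2]
      have hft : |f t - f (1/2)| ≤ ε' := by
        have := hδ (show dist t (1/2) < δ by rw [Real.dist_eq]; exact ht1)
        rw [Real.dist_eq] at this
        exact this.le
      rw [Real.norm_eq_abs, abs_mul, abs_mul, abs_mul,
        abs_of_nonneg (show (0:ℝ) ≤ 1 + |(-2 * (k:ℝ))| by positivity), habs]
      gcongr
      exact hhbd _
    calc |∫ t in (1 / 2 : ℝ)..(1 / 2 + 1 / (k:ℝ)),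
          (f t - f (1/2)) * ((1 + |(-2 * (k:ℝ))|) * g₀ (-2 * (k:ℝ))) *
            h (-2 * (k:ℝ) * (t - 1 / 2 - 1 / (2 * (k:ℝ))))|
        ≤ ε' * ((1 + 2*(k:ℝ)) * (|g₀minf| + 1)) * M * |(1/2 + 1/(k:ℝ)) - (1:ℝ)/2| :=
          intervalIntegral.norm_integral_le_of_norm_le_const hB
      _ = ε' * (((1 + 2*(k:ℝ)) * (1/(k:ℝ))) * (|g₀minf| + 1) * M) := by
          rw [show ((1/2 + 1/(k:ℝ)) - (1:ℝ)/2) = 1/(k:ℝ) by ring, abs_of_nonneg hinv0.le]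
          ring
      _ ≤ ε' * D := by
          have h2 : (1 + 2*(k:ℝ)) * (1/(k:ℝ)) ≤ 3 := by
            rw [mul_one_div, div_le_iff₀ hk0]
            linarith
          rw [hD_def]
          have hB0 : (0:ℝ) ≤ |g₀minf| + 1 := by positivity
          have hX : ((1 + 2*(k:ℝ)) * (1/(k:ℝ))) * (|g₀minf| + 1) * M
              ≤ 3 * (|g₀minf| + 1) * (M + 1) :=
            le_trans
              (mul_le_mul_of_nonneg_right (mul_le_mul_of_nonneg_right h2 hB0) hM0)
              (mul_le_mul_of_nonneg_left (by linarith) (by positivity))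
          exact mul_le_mul_of_nonneg_left hX hε'0.le
      _ < ε := by
          have he : ε' * (D + 1) = ε := div_mul_cancel₀ ε (ne_of_gt hD1)
          nlinarith [hε'0]
  have lim := hE.add hm
  rw [zero_add] at lim
  apply lim.congr'
  filter_upwards [eventually_ge_atTop 4] with k hk
  exact (hdec k hk).symm

theorem anisotropic_limit_zigzag
    (f h H g₀ : ℝ → ℝ) (g₀pinf g₀minf M : ℝ)
    (hf : ContinuousOn f (Set.Icc 0 1))
    (hh : Continuous h) (hhbd : ∀ y, |h y| ≤ M)
    (hH : ∀ x, HasDerivAt H (h x) x)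
    (hg₀ : Continuous g₀)
    (hg₀p : Tendsto g₀ atTop (nhds g₀pinf))
    (hg₀m : Tendsto g₀ atBot (nhds g₀minf)) :
    Tendsto (fun k : ℕ =>
        ∫ t in (0:ℝ)..1, f t * ((1 + |uZig k t|) * g₀ (uZig k t)) * h (yZig k t))
      atTop
      (nhds ((∫ t in (0:ℝ)..(1/2), f t * ((1 + |(0:ℝ)|) * g₀ 0) * h 0) +
             (∫ t in (1/2:ℝ)..1, f t * ((1 + |(0:ℝ)|) * g₀ 0) * h (-1)) +
             f (1 / 2) * g₀pinf * (H 1 - H 0) +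
             f (1 / 2) * g₀minf * (H 1 - H (-1)))) := by
  have l1 := zig_limQ1 f g₀ h hf
  have l2 := zig_limQ2 f h H g₀ g₀pinf M hf hh hhbd hH hg₀p
  have l3 := zig_limQ3 f h H g₀ g₀minf M hf hh hhbd hH hg₀m
  have l4 := zig_limQ4 f g₀ h hf
  have lsum := ((l1.add l2).add l3).add l4
  rw [show (∫ t in (0:ℝ)..(1/2), f t * ((1 + |(0:ℝ)|) * g₀ 0) * h 0)
        + (∫ t in (1/2:ℝ)..1, f t * ((1 + |(0:ℝ)|) * g₀ 0) * h (-1))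
        + f (1 / 2) * g₀pinf * (H 1 - H 0) + f (1 / 2) * g₀minf * (H 1 - H (-1))
      = (∫ t in (0:ℝ)..(1/2), f t * ((1 + |(0:ℝ)|) * g₀ 0) * h 0)
        + f (1/2) * g₀pinf * (H 1 - H 0) + f (1/2) * g₀minf * (H 1 - H (-1))
        + (∫ t in (1/2:ℝ)..1, f t * ((1 + |(0:ℝ)|) * g₀ 0) * h (-1)) by ring]
  apply lsum.congr'
  filter_upwards [eventually_ge_atTop 4] with k hk
  exact (zig_split f g₀ h hf hh hg₀ k hk).symm
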